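/- Let (Ω, ℱ, ℙ) be a probability space, m ≥ 1 an integer, (ℱ_k)_{0 ≤ k ≤ m} a filtration, and C > 0. Suppose Θ_0, …, Θ_{m−1} are integrable real-valued random variables such that for every k < m: Θ_k is ℱ_{k+1}-measurable, 𝔼[Θ_k ∣ ℱ_k] = 0 almost surely, and ∑_{n=2}^∞ (1/n!) 𝔼[|Θ_k|^n ∣ ℱ_k] ≤ C/m almost surely (equivalently, 𝔼[e^{|Θ_k|} − 1 − |Θ_k| ∣ ℱ_k] ≤ C/m a.s.). Then 𝔼[exp(∑_{k=0}^{m−1} Θ_k)] ≤ e^C. -/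

import Mathlib

open MeasureTheory Filter

/-- Pointwise key inequality: `exp x ≤ 1 + x + (exp |x| - 1 - |x|)`. -/
lemma exp_le_key (x : ℝ) : Real.exp x ≤ 1 + x + (Real.exp |x| - 1 - |x|) := by
  rcases le_or_gt 0 x with hx | hx
  · rw [abs_of_nonneg hx]; linarith
  · rw [abs_of_neg hx]
    have hs : Real.sinh x < x := Real.sinh_lt_self_iff.2 hx
    rw [Real.sinh_eq] at hs
    linarith

/-- Pull-out estimate in `lintegral` form: if `f ≥ 0` is `mk`-measurable, `h ≥ 0` is
integrable and `μ[h | mk] ≤ c` a.e., then `∫⁻ f·h ≤ c · ∫⁻ f`. -/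
lemma lintegral_mul_le_of_condexp_le {Ω : Type*} {m0 : MeasurableSpace Ω} (μ : Measure Ω)
    [IsProbabilityMeasure μ] {mk : MeasurableSpace Ω} (hle : mk ≤ m0)
    {f h : Ω → ℝ} (hf : StronglyMeasurable[mk] f) (hf0 : ∀ ω, 0 ≤ f ω)
    (hh : Integrable h μ) (hh0 : ∀ ω, 0 ≤ h ω)
    {c : ℝ} (hc : 0 ≤ c) (hch : ∀ᵐ ω ∂μ, (μ[h | mk]) ω ≤ c) :
    ∫⁻ ω, ENNReal.ofReal (f ω * h ω) ∂μ ≤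
      ENNReal.ofReal c * ∫⁻ ω, ENNReal.ofReal (f ω) ∂μ := by
  haveI : SigmaFinite (μ.trim hle) := inferInstance
  set fn : ℕ → Ω → ℝ := fun n ω => min (f ω) n with hfn
  have hfn_meas : ∀ n, StronglyMeasurable[mk] (fn n) := fun n =>
    (hf.measurable.min measurable_const).stronglyMeasurable
  have hfn_nonneg : ∀ n ω, 0 ≤ fn n ω := fun n ω => le_min (hf0 ω) (n.cast_nonneg)
  have hfn_bdd : ∀ n ω, |fn n ω| ≤ (n : ℝ) := fun n ω => by
    rw [abs_of_nonneg (hfn_nonneg n ω)]; exact min_le_right _ _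
  -- step 1 : bound for each truncation
  have step1 : ∀ n, ∫⁻ ω, ENNReal.ofReal (fn n ω * h ω) ∂μ ≤
      ENNReal.ofReal c * ∫⁻ ω, ENNReal.ofReal (f ω) ∂μ := by
    intro n
    have hfnh_int : Integrable (fn n * h) μ :=
      hh.bdd_mul ((hfn_meas n).mono hle).aestronglyMeasurable
        (Filter.Eventually.of_forall fun ω => by simpa [Real.norm_eq_abs] using hfn_bdd n ω)
    have hfnc_int : Integrable (fn n * μ[h | mk]) μ :=
      (integrable_condExp).bdd_mul ((hfn_meas n).mono hle).aestronglyMeasurable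
        (Filter.Eventually.of_forall fun ω => by simpa [Real.norm_eq_abs] using hfn_bdd n ω)
    have hfn_int : Integrable (fn n) μ := by
      refine Integrable.mono' (integrable_const (n : ℝ))
        ((hfn_meas n).mono hle).aestronglyMeasurable ?_
      exact Filter.Eventually.of_forall fun ω => by
        simpa [Real.norm_eq_abs] using hfn_bdd n ω
    have heq : ∫ ω, (fn n * h) ω ∂μ = ∫ ω, (fn n * μ[h | mk]) ω ∂μ := by
      rw [← integral_condExp hle (f := fn n * h)]
      exact integral_congr_ae (condExp_mul_of_stronglyMeasurable_left (hfn_meas n) hfnh_int hh)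
    have hle2 : ∫ ω, (fn n * μ[h | mk]) ω ∂μ ≤ ∫ ω, c * fn n ω ∂μ := by
      refine integral_mono_ae hfnc_int (hfn_int.const_mul c) ?_
      filter_upwards [hch] with ω hω
      simp only [Pi.mul_apply]
      rw [mul_comm c]
      exact mul_le_mul_of_nonneg_left hω (hfn_nonneg n ω)
    have hofReal : ∫⁻ ω, ENNReal.ofReal (fn n ω * h ω) ∂μ =
        ENNReal.ofReal (∫ ω, (fn n * h) ω ∂μ) := by
      rw [ofReal_integral_eq_lintegral_ofReal hfnh_int
        (Filter.Eventually.of_forall fun ω => mul_nonneg (hfn_nonneg n ω) (hh0 ω))]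
      rfl
    have hfn_lint : ENNReal.ofReal (∫ ω, fn n ω ∂μ) = ∫⁻ ω, ENNReal.ofReal (fn n ω) ∂μ :=
      ofReal_integral_eq_lintegral_ofReal hfn_int
        (Filter.Eventually.of_forall fun ω => hfn_nonneg n ω)
    calc ∫⁻ ω, ENNReal.ofReal (fn n ω * h ω) ∂μ
        = ENNReal.ofReal (∫ ω, (fn n * h) ω ∂μ) := hofReal
      _ ≤ ENNReal.ofReal (∫ ω, c * fn n ω ∂μ) := by
          exact ENNReal.ofReal_le_ofReal (heq ▸ hle2)
      _ = ENNReal.ofReal c * ENNReal.ofReal (∫ ω, fn n ω ∂μ) := by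
          rw [integral_const_mul, ENNReal.ofReal_mul hc]
      _ = ENNReal.ofReal c * ∫⁻ ω, ENNReal.ofReal (fn n ω) ∂μ := by rw [hfn_lint]
      _ ≤ ENNReal.ofReal c * ∫⁻ ω, ENNReal.ofReal (f ω) ∂μ := by
          refine mul_le_mul_right (lintegral_mono fun ω => ?_) _
          exact ENNReal.ofReal_le_ofReal (min_le_left _ _)
  -- step 2 : monotone convergence
  have h_mono : ∀ ω, Monotone fun n : ℕ => ENNReal.ofReal (fn n ω * h ω) := by
    intro ω i j hij
    refine ENNReal.ofReal_le_ofReal (mul_le_mul_of_nonneg_right ?_ (hh0 ω))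
    exact min_le_min le_rfl (Nat.cast_le.2 hij)
  have h_sup : ∀ ω, (⨆ n : ℕ, ENNReal.ofReal (fn n ω * h ω)) =
      ENNReal.ofReal (f ω * h ω) := by
    intro ω
    refine le_antisymm (iSup_le fun n => ENNReal.ofReal_le_ofReal
      (mul_le_mul_of_nonneg_right (min_le_left _ _) (hh0 ω))) ?_
    have : fn ⌈f ω⌉₊ ω = f ω := min_eq_left (Nat.le_ceil _)
    calc ENNReal.ofReal (f ω * h ω) = ENNReal.ofReal (fn ⌈f ω⌉₊ ω * h ω) := by rw [this]
      _ ≤ ⨆ n : ℕ, ENNReal.ofReal (fn n ω * h ω) := le_iSup (fun n => ENNReal.ofReal (fn n ω * h ω)) ⌈f ω⌉₊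
  have h_meas : ∀ n, AEMeasurable (fun ω => ENNReal.ofReal (fn n ω * h ω)) μ := by
    intro n
    exact (ENNReal.measurable_ofReal.comp_aemeasurable
      ((((hfn_meas n).mono hle).measurable).aemeasurable.mul
        hh.aestronglyMeasurable.aemeasurable))
  have key : ∫⁻ ω, ENNReal.ofReal (f ω * h ω) ∂μ =
      ⨆ n : ℕ, ∫⁻ ω, ENNReal.ofReal (fn n ω * h ω) ∂μ := by
    rw [← lintegral_iSup' h_meas (Filter.Eventually.of_forall h_mono)]
    exact lintegral_congr fun ω => (h_sup ω).symm
  rw [key]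
  exact iSup_le step1

/-- Lemma 6.1 of the paper: exponential-moment bound for sums of martingale differences
whose conditional exponential moments are controlled by `C / m`. -/
theorem stmt_0 {Ω : Type*} {m0 : MeasurableSpace Ω} (μ : Measure Ω) [IsProbabilityMeasure μ]
    (m : ℕ) (hm : 1 ≤ m) (ℱ : Filtration ℕ m0) (C : ℝ) (hC : 0 < C)
    (Θ : ℕ → Ω → ℝ)
    (h_int : ∀ k < m, Integrable (Θ k) μ)
    (h_meas : ∀ k < m, StronglyMeasurable[ℱ (k + 1)] (Θ k))
    (h_cond : ∀ k < m, μ[Θ k | ℱ k] =ᵐ[μ] 0)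
    (h_exp_int : ∀ k < m, Integrable (fun ω => Real.exp (abs (Θ k ω))) μ)
    (h_bound : ∀ k < m,
      ∀ᵐ ω ∂μ,
        (μ[fun ω => Real.exp (abs (Θ k ω)) - 1 - abs (Θ k ω) | ℱ k]) ω ≤ C / m) :
    ∫⁻ ω, ENNReal.ofReal (Real.exp (∑ k ∈ Finset.range m, Θ k ω)) ∂μ ≤
      ENNReal.ofReal (Real.exp C) := by
  have hm0 : (0 : ℝ) < m := by exact_mod_cast hm
  have hc0 : (0 : ℝ) ≤ 1 + C / m := by positivity
  -- the inductive claim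
  have main : ∀ k ≤ m, ∫⁻ ω, ENNReal.ofReal (Real.exp (∑ j ∈ Finset.range k, Θ j ω)) ∂μ ≤
      (ENNReal.ofReal (1 + C / m)) ^ k := by
    intro k hk
    induction k with
    | zero =>
      simp [lintegral_const]
    | succ k ih =>
      have hkm : k < m := hk
      have ihk := ih (le_of_lt hkm)
      -- define g and the dominating function h
      set g : Ω → ℝ := fun ω => Real.exp |Θ k ω| - 1 - |Θ k ω| with hg
      set h : Ω → ℝ := fun ω => 1 + Θ k ω + g ω with hh
      have hg_int : Integrable g μ :=
        ((h_exp_int k hkm).sub (integrable_const 1)).sub (h_int k hkm).abs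
      have hΘg_int : Integrable (fun ω => Θ k ω + g ω) μ := (h_int k hkm).add hg_int
      have hh_int : Integrable h μ :=
        ((integrable_const (1 : ℝ)).add hΘg_int).congr
          (Filter.Eventually.of_forall fun ω => by simp [hh, add_assoc])
      have h_exp_le : ∀ ω, Real.exp (Θ k ω) ≤ h ω := fun ω => exp_le_key (Θ k ω)
      have hh0 : ∀ ω, 0 ≤ h ω := fun ω => le_trans (Real.exp_pos _).le (h_exp_le ω)
      -- conditional expectation bound for h
      have hcondh : ∀ᵐ ω ∂μ, (μ[h | ℱ k]) ω ≤ 1 + C / m := by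
        have h1 : μ[h | ℱ k] =ᵐ[μ]
            μ[(fun _ => (1 : ℝ)) | ℱ k] + μ[(fun ω => Θ k ω + g ω) | ℱ k] := by
          refine EventuallyEq.trans (condExp_congr_ae (m := ℱ k)
            (Filter.Eventually.of_forall fun ω => ?_)) (condExp_add (μ := μ) (m := ℱ k)
            (integrable_const (1 : ℝ)) hΘg_int)
          simp [hh, add_assoc]
        have h2 : μ[(fun ω => Θ k ω + g ω) | ℱ k] =ᵐ[μ] μ[Θ k | ℱ k] + μ[g | ℱ k] :=
          condExp_add (h_int k hkm) hg_int _
        have h3 : μ[(fun _ => (1 : ℝ)) | ℱ k] = fun _ => (1 : ℝ) := condExp_const (ℱ.le k) 1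
        filter_upwards [h1, h2, h_cond k hkm, h_bound k hkm] with ω e1 e2 e3 e4
        rw [e1]
        simp only [Pi.add_apply, h3, e2, e3, Pi.zero_apply]
        have : (μ[g | ℱ k]) ω ≤ C / m := e4
        linarith
      -- measurability of the partial sum
      have hS_meas : StronglyMeasurable[ℱ k] (fun ω => Real.exp (∑ j ∈ Finset.range k, Θ j ω)) := by
        refine Real.continuous_exp.comp_stronglyMeasurable ?_
        refine Finset.stronglyMeasurable_fun_sum _ fun j hj => ?_
        have hjk : j + 1 ≤ k := Finset.mem_range.1 hj
        exact (h_meas j (lt_of_lt_of_le (Finset.mem_range.1 hj) hkm.le)).mono (ℱ.mono hjk)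
      have key := lintegral_mul_le_of_condexp_le μ (ℱ.le k) hS_meas
        (fun ω => (Real.exp_pos _).le) hh_int hh0 hc0 hcondh
      calc ∫⁻ ω, ENNReal.ofReal (Real.exp (∑ j ∈ Finset.range (k + 1), Θ j ω)) ∂μ
          ≤ ∫⁻ ω, ENNReal.ofReal (Real.exp (∑ j ∈ Finset.range k, Θ j ω) * h ω) ∂μ := by
            refine lintegral_mono fun ω => ENNReal.ofReal_le_ofReal ?_
            rw [Finset.sum_range_succ, Real.exp_add]
            exact mul_le_mul_of_nonneg_left (h_exp_le ω) (Real.exp_pos _).le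
        _ ≤ ENNReal.ofReal (1 + C / m) *
              ∫⁻ ω, ENNReal.ofReal (Real.exp (∑ j ∈ Finset.range k, Θ j ω)) ∂μ := key
        _ ≤ ENNReal.ofReal (1 + C / m) * (ENNReal.ofReal (1 + C / m)) ^ k :=
            mul_le_mul_right ihk _
        _ = (ENNReal.ofReal (1 + C / m)) ^ (k + 1) := (pow_succ' _ _).symm
  refine le_trans (main m le_rfl) ?_
  rw [← ENNReal.ofReal_pow hc0]
  refine ENNReal.ofReal_le_ofReal ?_
  have h1 : (1 + C / m) ^ m ≤ (Real.exp (C / m)) ^ m := by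
    refine pow_le_pow_left₀ hc0 ?_ m
    have := Real.add_one_le_exp (C / m)
    linarith
  refine le_trans h1 ?_
  rw [← Real.exp_nat_mul]
  have : (m : ℝ) * (C / m) = C := by field_simp
  rw [this]
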